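/- For the tandem queueing system with infinite buffers, for every index m with 0 ≤ m ≤ M and every n ≥ 1, the completion time satisfies the pointwise upper bound D_M(n) ≤ Σ_{j=1}^{n} τ_{m,j} + max_{1 ≤ k ≤ n} Σ_{j=1}^{k} (τ_{0,j} − τ_{m,j}) + Σ_{i=1}^{M} max_{1 ≤ l ≤ k ≤ n} Σ_{j=l}^{k} (τ_{i,j} − τ_{m,j}) + M · max_{1 ≤ k ≤ n} τ_{m,k}. -/

import Mathlib

open Finset

/-- Departure epochs of the tandem queueing system with infinite buffers. -/
noncomputable def depart (τ : ℕ → ℕ → ℝ) : ℕ → ℕ → ℝ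
  | 0, 0 => 0
  | 0, n + 1 => depart τ 0 n + τ 0 (n + 1)
  | _ + 1, 0 => 0
  | m + 1, n + 1 =>
      max (depart τ m (n + 1)) (depart τ (m + 1) n) + τ (m + 1) (n + 1)
  termination_by m n => (m, n)

lemma depart_zero_eq (τ : ℕ → ℕ → ℝ) : ∀ n, depart τ 0 n = ∑ j ∈ Finset.Icc 1 n, τ 0 j
  | 0 => by simp [depart]
  | n + 1 => by
      rw [depart, depart_zero_eq τ n,
        Finset.sum_Icc_succ_top (Nat.succ_le_succ (Nat.zero_le n))]

lemma depart_nonneg (τ : ℕ → ℕ → ℝ) (hτ : ∀ i n, 0 ≤ τ i n) : ∀ m n, 0 ≤ depart τ m n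
  | 0, 0 => by rw [depart]
  | 0, n + 1 => by
      rw [depart]
      exact add_nonneg (depart_nonneg τ hτ 0 n) (hτ 0 (n + 1))
  | m + 1, 0 => by rw [depart]
  | m + 1, n + 1 => by
      rw [depart]
      exact add_nonneg (le_trans (depart_nonneg τ hτ (m + 1) n) (le_max_right _ _))
        (hτ (m + 1) (n + 1))
  termination_by m n => (m, n)

lemma depart_succ_le (τ : ℕ → ℕ → ℝ) (hτ : ∀ i n, 0 ≤ τ i n) (i : ℕ) :
    ∀ n, ∀ hn : 1 ≤ n, depart τ (i + 1) n ≤ (Finset.Icc 1 n).sup'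
      (Finset.nonempty_Icc.mpr hn)
      (fun l => depart τ i l + ∑ j ∈ Finset.Icc l n, τ (i + 1) j) := by
  intro n
  induction n with
  | zero => intro hn; omega
  | succ n ih =>
    intro hn
    rcases Nat.eq_zero_or_pos n with h0 | h1
    · subst h0
      rw [depart]
      have hd0 : depart τ (i + 1) 0 = 0 := by rw [depart]
      rw [hd0, max_eq_left (depart_nonneg τ hτ i 1)]
      have hmem : (1 : ℕ) ∈ Finset.Icc 1 1 := by simp
      refine le_trans (le_of_eq ?_) (Finset.le_sup' _ hmem)
      simp
    · rw [depart]
      rw [← max_add_add_right]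
      apply max_le
      · have hmem : n + 1 ∈ Finset.Icc 1 (n + 1) := by simp
        refine le_trans (le_of_eq ?_) (Finset.le_sup' _ hmem)
        simp
      · have hB := ih h1
        refine le_trans (add_le_add_left hB _) ?_
        rw [← le_sub_iff_add_le]
        apply Finset.sup'_le
        intro l hl
        rw [le_sub_iff_add_le]
        simp only [Finset.mem_Icc] at hl
        have hmem : l ∈ Finset.Icc 1 (n + 1) := by simp; omega
        refine le_trans (le_of_eq ?_) (Finset.le_sup' _ hmem)
        rw [add_assoc, ← Finset.sum_Icc_succ_top (by omega : l ≤ n + 1)]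

lemma sum_Icc_split (f : ℕ → ℝ) (l n : ℕ) (h1 : 1 ≤ l) (h2 : l ≤ n) :
    (∑ j ∈ Finset.Icc 1 l, f j) + ∑ j ∈ Finset.Icc l n, f j
      = (∑ j ∈ Finset.Icc 1 n, f j) + f l := by
  obtain ⟨l', rfl⟩ : ∃ l', l = l' + 1 := ⟨l - 1, by omega⟩
  rw [Finset.sum_Icc_succ_top (Nat.succ_le_succ (Nat.zero_le l'))]
  rw [show Finset.Icc (l' + 1) n = Finset.Ioc l' n from Finset.Icc_add_one_left_eq_Ioc _ _,
    show Finset.Icc 1 l' = Finset.Ioc 0 l' from Finset.Icc_add_one_left_eq_Ioc _ _,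
    show Finset.Icc 1 n = Finset.Ioc 0 n from Finset.Icc_add_one_left_eq_Ioc _ _]
  rw [add_right_comm, Finset.sum_Ioc_consecutive f (Nat.zero_le l') (by omega)]

lemma segment_le_sSup (f : ℕ → ℝ) (N l k : ℕ) (h1 : 1 ≤ l) (h2 : l ≤ k) (h3 : k ≤ N) :
    ∑ j ∈ Finset.Icc l k, f j ≤
      sSup {s : ℝ | ∃ l k : ℕ, 1 ≤ l ∧ l ≤ k ∧ k ≤ N ∧ s = ∑ j ∈ Finset.Icc l k, f j} := by
  apply le_csSup
  · refine ⟨∑ j ∈ Finset.Icc 1 N, |f j|, ?_⟩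
    rintro s ⟨l', k', h1', h2', h3', rfl⟩
    calc ∑ j ∈ Finset.Icc l' k', f j
        ≤ ∑ j ∈ Finset.Icc l' k', |f j| := Finset.sum_le_sum fun j _ => le_abs_self _
      _ ≤ ∑ j ∈ Finset.Icc 1 N, |f j| :=
          Finset.sum_le_sum_of_subset_of_nonneg (Finset.Icc_subset_Icc h1' h3')
            (fun j _ _ => abs_nonneg _)
  · exact ⟨l, k, h1, h2, h3, rfl⟩

lemma depart_le_main (τ : ℕ → ℕ → ℝ) (hτ : ∀ i n, 0 ≤ τ i n)
    (m : ℕ) (N : ℕ) (hN : 1 ≤ N) :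
    ∀ i, ∀ n, 1 ≤ n → n ≤ N →
      depart τ i n ≤ (∑ j ∈ Finset.Icc 1 n, τ m j)
        + (Finset.Icc 1 N).sup' (Finset.nonempty_Icc.mpr hN)
            (fun k => ∑ j ∈ Finset.Icc 1 k, (τ 0 j - τ m j))
        + (∑ p ∈ Finset.Icc 1 i,
            sSup { s : ℝ | ∃ l k : ℕ, 1 ≤ l ∧ l ≤ k ∧ k ≤ N ∧
              s = ∑ j ∈ Finset.Icc l k, (τ p j - τ m j) })
        + (i : ℝ) * (Finset.Icc 1 N).sup' (Finset.nonempty_Icc.mpr hN) (fun k => τ m k) := by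
  intro i
  induction i with
  | zero =>
    intro n hn hnN
    simp only [Finset.Icc_eq_empty_of_lt (by omega : (1:ℕ) > 0), Finset.sum_empty,
      Nat.cast_zero, zero_mul, add_zero]
    rw [depart_zero_eq]
    have h1 : ∑ j ∈ Finset.Icc 1 n, τ 0 j
        = (∑ j ∈ Finset.Icc 1 n, τ m j) + ∑ j ∈ Finset.Icc 1 n, (τ 0 j - τ m j) := by
      rw [← Finset.sum_add_distrib]; apply Finset.sum_congr rfl; intros; ring
    rw [h1]
    have hmem : n ∈ Finset.Icc 1 N := by simp; omega
    exact add_le_add_right (Finset.le_sup' (fun k => ∑ j ∈ Finset.Icc 1 k, (τ 0 j - τ m j)) hmem) _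
  | succ i ih =>
    intro n hn hnN
    refine le_trans (depart_succ_le τ hτ i n hn) (Finset.sup'_le _ _ fun l hl => ?_)
    simp only [Finset.mem_Icc] at hl
    obtain ⟨hl1, hl2⟩ := hl
    have ih' := ih l hl1 (by omega)
    have e1 : ∑ j ∈ Finset.Icc l n, τ (i + 1) j
        = (∑ j ∈ Finset.Icc l n, (τ (i + 1) j - τ m j)) + ∑ j ∈ Finset.Icc l n, τ m j := by
      rw [← Finset.sum_add_distrib]; apply Finset.sum_congr rfl; intros; ring
    have e2 := sum_Icc_split (τ m) l n hl1 hl2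
    have h3 : ∑ j ∈ Finset.Icc l n, (τ (i + 1) j - τ m j) ≤
        sSup { s : ℝ | ∃ l k : ℕ, 1 ≤ l ∧ l ≤ k ∧ k ≤ N ∧
          s = ∑ j ∈ Finset.Icc l k, (τ (i + 1) j - τ m j) } :=
      segment_le_sSup _ N l n hl1 hl2 (by omega)
    have hmem : l ∈ Finset.Icc 1 N := by simp; omega
    have h4 : τ m l ≤ (Finset.Icc 1 N).sup' (Finset.nonempty_Icc.mpr hN) (fun k => τ m k) :=
      Finset.le_sup' _ hmem
    have h5 : (∑ p ∈ Finset.Icc 1 (i + 1),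
          sSup { s : ℝ | ∃ l k : ℕ, 1 ≤ l ∧ l ≤ k ∧ k ≤ N ∧
            s = ∑ j ∈ Finset.Icc l k, (τ p j - τ m j) })
        = (∑ p ∈ Finset.Icc 1 i,
            sSup { s : ℝ | ∃ l k : ℕ, 1 ≤ l ∧ l ≤ k ∧ k ≤ N ∧
              s = ∑ j ∈ Finset.Icc l k, (τ p j - τ m j) })
          + sSup { s : ℝ | ∃ l k : ℕ, 1 ≤ l ∧ l ≤ k ∧ k ≤ N ∧
              s = ∑ j ∈ Finset.Icc l k, (τ (i + 1) j - τ m j) } :=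
      Finset.sum_Icc_succ_top (Nat.succ_le_succ (Nat.zero_le i)) _
    rw [h5]
    push_cast
    linarith

theorem depart_le_sum_add (M : ℕ) (τ : ℕ → ℕ → ℝ) (hτ : ∀ i n, 0 ≤ τ i n)
    (m : ℕ) (hm : m ≤ M) (n : ℕ) (hn : 1 ≤ n) :
    depart τ M n ≤
      (∑ j ∈ Finset.Icc 1 n, τ m j)
        + (Finset.Icc 1 n).sup' (Finset.nonempty_Icc.mpr hn)
            (fun k => ∑ j ∈ Finset.Icc 1 k, (τ 0 j - τ m j))
        + (∑ i ∈ Finset.Icc 1 M,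
            sSup { s : ℝ | ∃ l k : ℕ, 1 ≤ l ∧ l ≤ k ∧ k ≤ n ∧
              s = ∑ j ∈ Finset.Icc l k, (τ i j - τ m j) })
        + (M : ℝ) * (Finset.Icc 1 n).sup' (Finset.nonempty_Icc.mpr hn)
            (fun k => τ m k) := by
  exact depart_le_main τ hτ m n hn M n hn le_rfl
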